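/- For all integers m ≥ 2 and x ≥ 1 and every codeword c ∈ C(m,x) whose leftmost bit c_{m−1} equals 0, the index of c satisfies 2·g(c) = Σ_{i=0}^{m−2} N(i−x+1, x)·[c_i = 1], where the sum ranges over the positions i with c_i = 1 and any term N(k,x) with k ≤ 1 is interpreted, by convention, as 2. -/
import Mathlib


/-- `noForbidden m x c` says the binary word `c = (c_{m-1}, …, c_0)` contains no contiguous
subword of the form `0 1^y 0` or `1 0^y 1` for any `1 ≤ y ≤ x`. -/
def noForbidden (m x : ℕ) (c : Fin m → Bool) : Prop :=
  ∀ j y : ℕ, 1 ≤ y → y ≤ x → (h : j + y + 1 < m) →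
    ¬ ((∀ k, 1 ≤ k → (hk : k ≤ y) → c ⟨j + k, by omega⟩ = ! c ⟨j, by omega⟩) ∧
        c ⟨j + y + 1, h⟩ = c ⟨j, by omega⟩)

/-- `N(m, x)`: the cardinality of the LOCO code `C(m, x)`. -/
noncomputable def locoN (m x : ℕ) : ℕ := Nat.card {c : Fin m → Bool // noForbidden m x c}

/-- `N(k, x)` extended to integer `k` by the convention `N(k, x) = 2` for `k ≤ 1`. -/
noncomputable def Nex (k : ℤ) (x : ℕ) : ℤ := if k ≤ 1 then 2 else (locoN k.toNat x : ℤ)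

/-- Strict lexicographic order on binary words, comparing bits from `c_{m-1}`
(most significant) down to `c_0`, with `0 < 1`. -/
def lexLt (m : ℕ) (d c : Fin m → Bool) : Prop :=
  ∃ i : Fin m, d i = false ∧ c i = true ∧ ∀ j : Fin m, (i : ℕ) < (j : ℕ) → d j = c j

/-- The index `g(m, x, c)` of a codeword: the number of codewords of `C(m, x)` that
precede `c` in lexicographic order. -/
noncomputable def locoIdx (m x : ℕ) (c : Fin m → Bool) : ℕ :=
  Nat.card {d : Fin m → Bool // noForbidden m x d ∧ lexLt m d c}

namespace LocoAux

/-- scan-validity: word read from top (index n-1) down; context: previous bit `b`,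
`t` further copies of `b` required before a switch is allowed. -/
def VF (x : ℕ) : ∀ n : ℕ, ℕ → Bool → (Fin n → Bool) → Bool
  | 0, _, _, _ => true
  | n+1, t, b, c =>
    if c (Fin.last n) = b then VF x n (t-1) b (Fin.init c)
    else (t == 0) && VF x n x (c (Fin.last n)) (Fin.init c)

/-- boolean lex-lt from top bit down. -/
def ltF : ∀ n : ℕ, (Fin n → Bool) → (Fin n → Bool) → Bool
  | 0, _, _ => false
  | n+1, d, c =>
    (!(d (Fin.last n)) && c (Fin.last n)) ||
      ((d (Fin.last n) == c (Fin.last n)) && ltF n (Fin.init d) (Fin.init c))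

/-- counting function for scan-valid words. -/
def fc (x : ℕ) : ℕ → ℕ → ℕ
  | 0, _ => 1
  | n+1, 0 => fc x n 0 + fc x n x
  | n+1, t+1 => fc x n t

lemma VF_succ (x n t b) (c : Fin (n+1) → Bool) :
    VF x (n+1) t b c =
      if c (Fin.last n) = b then VF x n (t-1) b (Fin.init c)
      else (t == 0) && VF x n x (c (Fin.last n)) (Fin.init c) := rfl

lemma ltF_succ (n : ℕ) (d c : Fin (n+1) → Bool) :
    ltF (n+1) d c =
      ((!(d (Fin.last n)) && c (Fin.last n)) ||
        ((d (Fin.last n) == c (Fin.last n)) && ltF n (Fin.init d) (Fin.init c))) := rfl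

lemma VF_snoc (x n t b) (c' : Fin n → Bool) (a : Bool) :
    VF x (n+1) t b (Fin.snoc c' a) =
      if a = b then VF x n (t-1) b c' else ((t == 0) && VF x n x a c') := by
  rw [VF_succ, Fin.snoc_last, Fin.init_snoc]

lemma ltF_snoc (n) (d' c' : Fin n → Bool) (a0 a : Bool) :
    ltF (n+1) (Fin.snoc d' a0) (Fin.snoc c' a) =
      ((!a0 && a) || ((a0 == a) && ltF n d' c')) := by
  rw [ltF_succ, Fin.snoc_last, Fin.snoc_last, Fin.init_snoc, Fin.init_snoc]



def SS (x n t : ℕ) : ℕ := ∑ k ∈ Finset.range (min t n), fc x (n - 1 - k) x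

lemma fc_small (x : ℕ) : ∀ n t, n ≤ t → fc x n t = 1 := by
  intro n
  induction n with
  | zero => intro t _; rfl
  | succ n ih =>
    intro t h
    obtain ⟨s, rfl⟩ : ∃ s, t = s + 1 := ⟨t - 1, by omega⟩
    exact ih s (by omega)

lemma fc_big (x : ℕ) : ∀ t n, t ≤ n → fc x n t = fc x (n - t) 0 := by
  intro t
  induction t with
  | zero => intro n _; rfl
  | succ t ih =>
    intro n h
    obtain ⟨m, rfl⟩ : ∃ m, n = m + 1 := ⟨n - 1, by omega⟩
    show fc x m t = _
    rw [ih m (by omega)]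
    congr 1
    omega

lemma SS_zero (x n : ℕ) : SS x n 0 = 0 := by simp [SS]

lemma SS_succ (x n t : ℕ) : SS x (n+1) (t+1) = fc x n x + SS x n t := by
  unfold SS
  have h : min (t+1) (n+1) = min t n + 1 := by omega
  rw [h, Finset.sum_range_succ']
  simp only [Nat.add_sub_cancel]
  rw [Nat.add_comm]
  congr 1
  apply Finset.sum_congr rfl
  intro k _
  congr 1
  omega

/-- the key identity `G(N) = F(N,x) + Σ_{k<min(t,N)} F(N-1-k,x)` (generalized in `t`). -/
lemma gIdent (x : ℕ) : ∀ N t, fc x N 0 = fc x N t + SS x N t := by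
  intro N
  induction N with
  | zero => intro t; simp [SS, fc, fc_small]
  | succ N ih =>
    intro t
    match t with
    | 0 => simp [SS_zero]
    | s+1 =>
      rw [SS_succ]
      show fc x N 0 + fc x N x = fc x N s + (fc x N x + SS x N s)
      have := ih s
      omega



def snocSplitEquiv (n : ℕ) (P : (Fin (n+1) → Bool) → Prop) :
    {c : Fin (n+1) → Bool // P c} ≃
      {c' : Fin n → Bool // P (Fin.snoc c' false)} ⊕ {c' : Fin n → Bool // P (Fin.snoc c' true)} where
  toFun := fun ⟨c, h⟩ =>
    if hb : c (Fin.last n) = true then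
      Sum.inr ⟨Fin.init c, by rw [← hb, Fin.snoc_init_self]; exact h⟩
    else
      Sum.inl ⟨Fin.init c, by
        have hb' : c (Fin.last n) = false := by simpa using hb
        rw [← hb', Fin.snoc_init_self]; exact h⟩
  invFun := fun q =>
    match q with
    | Sum.inl ⟨c', h⟩ => ⟨Fin.snoc c' false, h⟩
    | Sum.inr ⟨c', h⟩ => ⟨Fin.snoc c' true, h⟩
  left_inv := by
    rintro ⟨c, h⟩
    dsimp only
    by_cases hb : c (Fin.last n) = true
    · rw [dif_pos hb]
      have h2 := Fin.snoc_init_self c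
      rw [hb] at h2
      exact Subtype.ext h2
    · rw [dif_neg hb]
      have hb' : c (Fin.last n) = false := by simpa using hb
      have h2 := Fin.snoc_init_self c
      rw [hb'] at h2
      exact Subtype.ext h2
  right_inv := by
    rintro (⟨c', h⟩ | ⟨c', h⟩)
    · simp [Fin.snoc_last, Fin.init_snoc]
    · simp [Fin.snoc_last, Fin.init_snoc]

lemma card_snoc_split (n : ℕ) (P : (Fin (n+1) → Bool) → Prop) [DecidablePred P] :
    Fintype.card {c : Fin (n+1) → Bool // P c} =
      Fintype.card {c' : Fin n → Bool // P (Fin.snoc c' false)} +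
        Fintype.card {c' : Fin n → Bool // P (Fin.snoc c' true)} := by
  rw [Fintype.card_congr (snocSplitEquiv n P), Fintype.card_sum]

lemma card_iff {α : Type*} [Fintype α] {P Q : α → Prop} [DecidablePred P] [DecidablePred Q]
    (h : ∀ a, P a ↔ Q a) :
    Fintype.card {a : α // P a} = Fintype.card {a : α // Q a} :=
  Fintype.card_congr (Equiv.subtypeEquivRight h)

lemma card_false {α : Type*} [Fintype α] {P : α → Prop} [DecidablePred P]
    (h : ∀ a, ¬ P a) : Fintype.card {a : α // P a} = 0 := by
  have : IsEmpty {a : α // P a} := ⟨fun ⟨a, ha⟩ => h a ha⟩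
  exact Fintype.card_eq_zero

lemma card_true {α : Type*} [Fintype α] {P : α → Prop} [DecidablePred P]
    (h : ∀ a, P a) : Fintype.card {a : α // P a} = Fintype.card α :=
  Fintype.card_congr (Equiv.subtypeUnivEquiv h)


lemma card_snoc_split' (n : ℕ) (P : (Fin (n+1) → Bool) → Prop) [DecidablePred P]
    (Q0 Q1 : (Fin n → Bool) → Prop) [DecidablePred Q0] [DecidablePred Q1]
    (h0 : ∀ c', P (Fin.snoc c' false) ↔ Q0 c') (h1 : ∀ c', P (Fin.snoc c' true) ↔ Q1 c') :
    Fintype.card {c : Fin (n+1) → Bool // P c} =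
      Fintype.card {c' : Fin n → Bool // Q0 c'} + Fintype.card {c' : Fin n → Bool // Q1 c'} := by
  rw [card_snoc_split n P, card_iff h0, card_iff h1]

lemma card_VF (x : ℕ) : ∀ n t b, Fintype.card {d : Fin n → Bool // VF x n t b d = true} = fc x n t := by
  intro n
  induction n with
  | zero =>
    intro t b
    rw [card_true (P := fun d : Fin 0 → Bool => VF x 0 t b d = true) (fun d => rfl)]
    simp [fc]
  | succ n ih =>
    intro t b
    rcases t with _ | s <;> cases b
    · rw [card_snoc_split' n _ (fun d' => VF x n 0 false d' = true)
        (fun d' => VF x n x true d' = true)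
        (fun d' => by rw [VF_snoc]; simp) (fun d' => by rw [VF_snoc]; simp), ih, ih]
      rfl
    · rw [card_snoc_split' n _ (fun d' => VF x n x false d' = true)
        (fun d' => VF x n 0 true d' = true)
        (fun d' => by rw [VF_snoc]; simp) (fun d' => by rw [VF_snoc]; simp), ih, ih]
      simp [fc, Nat.add_comm]
    · rw [card_snoc_split' n _ (fun d' => VF x n s false d' = true) (fun _ => False)
        (fun d' => by rw [VF_snoc]; simp) (fun d' => by rw [VF_snoc]; simp), ih,
        card_false (fun _ h => h)]
      rfl
    · rw [card_snoc_split' n _ (fun _ => False) (fun d' => VF x n s true d' = true)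
        (fun d' => by rw [VF_snoc]; simp) (fun d' => by rw [VF_snoc]; simp), ih,
        card_false (fun _ h => h)]
      show 0 + fc x n s = fc x n s
      omega
def phiF (x n : ℕ) (c : Fin n → Bool) : ℕ := ∑ i : Fin n, if c i then fc x (i : ℕ) x else 0

def cntF (x n t : ℕ) (b : Bool) (c : Fin n → Bool) : ℕ :=
  Fintype.card {d : Fin n → Bool // VF x n t b d = true ∧ ltF n d c = true}

lemma phiF_snoc (x n : ℕ) (c' : Fin n → Bool) (a : Bool) :
    phiF x (n+1) (Fin.snoc c' a) = (if a then fc x n x else 0) + phiF x n c' := by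
  unfold phiF
  rw [Fin.sum_univ_castSucc, Nat.add_comm]
  simp [Fin.snoc_castSucc, Fin.snoc_last]

lemma main_count (x : ℕ) : ∀ n t b (c : Fin n → Bool), VF x n t b c = true →
    cntF x n t b c + (if b then SS x n t else 0) = phiF x n c := by
  intro n
  induction n with
  | zero =>
    intro t b c _
    have h0 : cntF x 0 t b c = 0 := card_false (fun d hd => by simpa [ltF] using hd.2)
    simp [h0, phiF, SS]
  | succ n ih =>
    intro t b c hc
    obtain ⟨c', a, rfl⟩ : ∃ c' a, c = Fin.snoc c' a :=
      ⟨Fin.init c, c (Fin.last n), (Fin.snoc_init_self c).symm⟩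
    rw [VF_snoc] at hc
    rw [phiF_snoc]
    unfold cntF
    cases b
    · -- b = false
      cases a
      · -- a = false
        simp only [if_pos rfl] at hc
        rcases t with _ | s
        · -- t = 0
          rw [card_snoc_split' n _
            (fun d' => VF x n 0 false d' = true ∧ ltF n d' c' = true) (fun _ => False)
            (fun d' => by rw [VF_snoc, ltF_snoc]; simp)
            (fun d' => by rw [VF_snoc, ltF_snoc]; simp),
            card_false (fun _ h => h)]
          have H := ih 0 false c' hc
          unfold cntF at H
          simp only [if_neg (by simp : ¬ (false = true))] at H ⊢
          simpa using H
        · -- t = s+1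
          rw [card_snoc_split' n _
            (fun d' => VF x n s false d' = true ∧ ltF n d' c' = true) (fun _ => False)
            (fun d' => by rw [VF_snoc, ltF_snoc]; simp)
            (fun d' => by rw [VF_snoc, ltF_snoc]; simp),
            card_false (fun _ h => h)]
          have H := ih s false c' hc
          unfold cntF at H
          simp only [if_neg (by simp : ¬ (false = true))] at H ⊢
          simpa using H
      · -- a = true, b = false : hc : t = 0 ∧ VF x n x true c'
        simp only [if_neg (by simp : ¬ (true = false)), Bool.and_eq_true, beq_iff_eq] at hc
        obtain ⟨ht, hc'⟩ := hc
        have ht' : t = 0 := by simpa using ht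
        subst ht'
        rw [card_snoc_split' n _
          (fun d' => VF x n 0 false d' = true)
          (fun d' => VF x n x true d' = true ∧ ltF n d' c' = true)
          (fun d' => by rw [VF_snoc, ltF_snoc]; simp)
          (fun d' => by rw [VF_snoc, ltF_snoc]; simp),
          card_VF]
        have H := ih x true c' hc'
        unfold cntF at H
        simp only [if_pos rfl] at H
        have G := gIdent x n x
        simp only [if_neg (by simp : ¬ (false = true)), if_pos rfl]
        simp only [if_true, show (false = true) = False from by simp, if_false] at H ⊢
        omega
    · -- b = true
      cases a
      · -- a = false, b = true : hc : t = 0 ∧ VF x n x false c'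
        simp only [if_neg (by simp : ¬ (false = true)), Bool.and_eq_true, beq_iff_eq] at hc
        obtain ⟨ht, hc'⟩ := hc
        have ht' : t = 0 := by simpa using ht
        subst ht'
        rw [card_snoc_split' n _
          (fun d' => VF x n x false d' = true ∧ ltF n d' c' = true) (fun _ => False)
          (fun d' => by rw [VF_snoc, ltF_snoc]; simp)
          (fun d' => by rw [VF_snoc, ltF_snoc]; simp),
          card_false (fun _ h => h)]
        have H := ih x false c' hc'
        unfold cntF at H
        simp only [if_neg (by simp : ¬ (false = true))] at H
        simp only [if_pos rfl, SS_zero]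
        simp only [if_true, show (false = true) = False from by simp, if_false] at H ⊢
        omega
      · -- a = true, b = true
        simp only [if_pos rfl] at hc
        rcases t with _ | s
        · -- t = 0
          rw [card_snoc_split' n _
            (fun d' => VF x n x false d' = true)
            (fun d' => VF x n 0 true d' = true ∧ ltF n d' c' = true)
            (fun d' => by rw [VF_snoc, ltF_snoc]; simp)
            (fun d' => by rw [VF_snoc, ltF_snoc]; simp),
            card_VF]
          have H := ih 0 true c' hc
          unfold cntF at H
          simp only [if_pos rfl, SS_zero] at H ⊢
          simp only [if_true, show (false = true) = False from by simp, if_false] at H ⊢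
          omega
        · -- t = s+1
          rw [card_snoc_split' n _
            (fun _ => False)
            (fun d' => VF x n s true d' = true ∧ ltF n d' c' = true)
            (fun d' => by rw [VF_snoc, ltF_snoc]; simp)
            (fun d' => by rw [VF_snoc, ltF_snoc]; simp),
            card_false (fun _ h => h)]
          have H := ih s true c' hc
          unfold cntF at H
          simp only [if_pos rfl, SS_succ] at H ⊢
          simp only [if_true, show (false = true) = False from by simp, if_false] at H ⊢
          omega
/-- `tr n c p`: the word has a transition between positions `p` and `p+1`. -/
def tr (n : ℕ) (c : Fin n → Bool) (p : ℕ) : Prop :=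
  ∃ hp : p + 1 < n, c ⟨p+1, hp⟩ ≠ c ⟨p, by omega⟩

/-- no two transitions within distance `≤ x`. -/
def NC (x n : ℕ) (c : Fin n → Bool) : Prop :=
  ∀ p q : ℕ, p < q → q - p ≤ x → tr n c p → tr n c q → False

/-- topmost transition. -/
def topT (n : ℕ) (c : Fin n → Bool) (q : ℕ) : Prop :=
  tr n c q ∧ ∀ r, q < r → ¬ tr n c r

/-- boundary condition for scan-validity relative to context `(b, t)`. -/
def Bd (x n t : ℕ) (b : Bool) (c : Fin n → Bool) : Prop :=
  ∀ _ : 0 < n,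
    (c ⟨n-1, by omega⟩ ≠ b → t = 0) ∧
    ∀ q, topT n c q →
      (if c ⟨n-1, by omega⟩ = b then q + t ≤ n - 1 else q + x + 1 ≤ n - 1)

lemma bool_ne_iff {a b : Bool} : a ≠ b ↔ a = !b := by
  cases a <;> cases b <;> simp

lemma exists_topT {n : ℕ} {c : Fin n → Bool} {p : ℕ} (hp : tr n c p) :
    ∃ q, p ≤ q ∧ topT n c q := by
  classical
  have hb : ∀ r, tr n c r → r ≤ n - 2 := by
    rintro r ⟨hr, _⟩; omega
  refine ⟨Nat.findGreatest (tr n c) (n-2), Nat.le_findGreatest (hb p hp) hp, ?_, ?_⟩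
  · exact Nat.findGreatest_spec (m := p) (hb p hp) hp
  · intro r hlt htr
    have hrb := hb r htr
    exact Nat.findGreatest_is_greatest hlt hrb htr
lemma bit_congr {m : ℕ} (c : Fin m → Bool) {i j : ℕ} (h : i = j) (hi : i < m) (hj : j < m) :
    c ⟨i, hi⟩ = c ⟨j, hj⟩ := by subst h; rfl

lemma bool_trans_eq {a b c0 : Bool} (h1 : a ≠ b) (h2 : b = !c0) : a = c0 := by
  revert h1 h2; cases a <;> cases b <;> cases c0 <;> decide

lemma bool_ne_of_eq_not {a b : Bool} (h : a = !b) : a ≠ b := by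
  revert h; cases a <;> cases b <;> decide

lemma bool_ne_of_two {a b c0 : Bool} (h1 : a = c0) (h2 : b = !c0) : a ≠ b := by
  revert h1 h2; cases a <;> cases b <;> cases c0 <;> decide

lemma noForbidden_iff_NC (m x : ℕ) (c : Fin m → Bool) :
    noForbidden m x c ↔ NC x m c := by
  constructor
  · intro hnf p q hpq hd hp hq
    classical
    have hex : ∃ r, p < r ∧ tr m c r := ⟨q, hpq, hq⟩
    obtain ⟨hq0p, hq0t⟩ := Nat.find_spec hex
    have hq0min : ∀ r, r < Nat.find hex → ¬ (p < r ∧ tr m c r) := fun r hr => Nat.find_min hex hr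
    set q0 := Nat.find hex with hq0
    have hq0le : q0 ≤ q := by
      by_contra hgt
      exact hq0min q (by omega) ⟨hpq, hq⟩
    obtain ⟨hq0n, hq0ne⟩ := hq0t
    obtain ⟨hpn, hpne⟩ := hp
    have hconst : ∀ k (h1k : 1 ≤ k) (h2k : k ≤ q0 - p), c ⟨p + k, by omega⟩ = ! c ⟨p, by omega⟩ := by
      intro k
      induction k with
      | zero => omega
      | succ k ihk =>
        intro _ hk
        rcases Nat.lt_or_ge 0 k with h1 | h1
        · have hkk := ihk (by omega) (by omega)
          have heqk : c ⟨p + k + 1, by omega⟩ = c ⟨p + k, by omega⟩ := by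
            by_contra hne
            exact hq0min (p + k) (by omega) ⟨by omega, ⟨by omega, hne⟩⟩
          exact heqk.trans hkk
        · have hk0 : k = 0 := by omega
          subst hk0
          exact bool_ne_iff.mp hpne
    have hA : 1 ≤ q0 - p := by omega
    have hB : q0 - p ≤ x := by omega
    have hC : p + (q0 - p) + 1 < m := by omega
    refine hnf p (q0 - p) hA hB hC ⟨fun k hk1 hk2 => hconst k hk1 hk2, ?_⟩
    have h2 : c ⟨q0, by omega⟩ = ! c ⟨p, by omega⟩ := by
      have h3 := hconst (q0 - p) (by omega) le_rfl
      exact (bit_congr c (by omega : q0 = p + (q0 - p)) (by omega) (by omega)).trans h3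
    have h4 : c ⟨q0 + 1, hq0n⟩ = c ⟨p, by omega⟩ := bool_trans_eq hq0ne h2
    exact (bit_congr c (by omega : p + (q0 - p) + 1 = q0 + 1) (by omega) (by omega)).trans h4
  · intro hnc j y hy1 hyx h
    rintro ⟨hall, heq⟩
    have t1 : tr m c j := ⟨by omega, bool_ne_of_eq_not (hall 1 le_rfl (by omega))⟩
    have t2 : tr m c (j + y) := ⟨by omega, bool_ne_of_two heq (hall y hy1 le_rfl)⟩
    exact hnc j (j + y) (by omega) (by omega) t1 t2
lemma tr_init_iff {n : ℕ} (c : Fin (n+1) → Bool) (p : ℕ) :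
    tr n (Fin.init c) p ↔ (p + 1 < n ∧ tr (n+1) c p) := by
  constructor
  · rintro ⟨hp, hne⟩
    exact ⟨hp, by omega, hne⟩
  · rintro ⟨hpn, ⟨_, hne⟩⟩
    exact ⟨hpn, hne⟩

lemma Bd_succ (x n t : ℕ) (b : Bool) (c : Fin (n+1) → Bool) :
    Bd x (n+1) t b c ↔
      ((c ⟨n, by omega⟩ ≠ b → t = 0) ∧
        ∀ q, topT (n+1) c q → (if c ⟨n, by omega⟩ = b then q + t ≤ n else q + x + 1 ≤ n)) := by
  unfold Bd
  constructor
  · intro h; exact h (by omega)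
  · intro h _; exact h
lemma VF_iff (x : ℕ) : ∀ n t b (c : Fin n → Bool),
    VF x n t b c = true ↔ (NC x n c ∧ Bd x n t b c) := by
  intro n
  induction n with
  | zero =>
    intro t b c
    constructor
    · intro _
      exact ⟨fun p q _ _ tp _ => absurd tp.1 (by omega), fun hn => absurd hn (by omega)⟩
    · intro _; rfl
  | succ n ih =>
    intro t b c
    rw [VF_succ]
    rcases Nat.eq_zero_or_pos n with hn0 | hn1
    · -- n = 0 : words of length 1
      subst hn0
      have hnotr : ∀ p, ¬ tr 1 c p := fun p ⟨hp, _⟩ => by omega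
      have hNC : NC x 1 c := fun p q _ _ tp _ => hnotr p tp
      have hVF0 : ∀ t' b' (c' : Fin 0 → Bool), VF x 0 t' b' c' = true := fun _ _ _ => rfl
      by_cases hab : c (Fin.last 0) = b
      · rw [if_pos hab]
        simp only [hVF0, true_iff]
        refine ⟨hNC, ?_⟩
        rw [Bd_succ]
        exact ⟨fun hne => absurd hab hne, fun q hq => absurd hq.1 (hnotr q)⟩
      · rw [if_neg hab]
        constructor
        · intro h
          rw [Bool.and_eq_true] at h
          have ht : t = 0 := by simpa using h.1
          refine ⟨hNC, ?_⟩
          rw [Bd_succ]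
          exact ⟨fun _ => ht, fun q hq => absurd hq.1 (hnotr q)⟩
        · rintro ⟨_, hbd⟩
          rw [Bd_succ] at hbd
          have ht : t = 0 := hbd.1 hab
          subst ht
          simp [hVF0]
    · -- n ≥ 1
      obtain ⟨m, rfl⟩ : ∃ m, n = m + 1 := ⟨n - 1, by omega⟩
      -- abbreviations
      have hlast : c (Fin.last (m+1)) = c ⟨m+1, by omega⟩ := rfl
      have hnotr_hi : ∀ r, m + 1 ≤ r → ¬ tr (m+2) c r := fun r hr ⟨h, _⟩ => by omega
      have htm : tr (m+2) c m ↔ c ⟨m+1, by omega⟩ ≠ c ⟨m, by omega⟩ :=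
        ⟨fun ⟨_, h⟩ => h, fun h => ⟨by omega, h⟩⟩
      have hinit_top : (Fin.init c : Fin (m+1) → Bool) ⟨m, by omega⟩ = c ⟨m, by omega⟩ := rfl
      have hNCdown : NC x (m+2) c → NC x (m+1) (Fin.init c) := by
        intro h p q h1 h2 tp tq
        exact h p q h1 h2 ((tr_init_iff c p).mp tp).2 ((tr_init_iff c q).mp tq).2
      by_cases hat : c ⟨m+1, by omega⟩ = c ⟨m, by omega⟩
      · -- no transition at the top pair
        have hnotrm : ¬ tr (m+2) c m := fun h => (htm.mp h) hat
        have htrlow : ∀ p, tr (m+2) c p → p + 1 < m + 1 := by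
          intro p hp
          rcases Nat.lt_or_ge p m with h | h
          · omega
          · rcases Nat.eq_or_lt_of_le h with h' | h'
            · exact absurd hp (h' ▸ hnotrm)
            · exact absurd hp (hnotr_hi p (by omega))
        have hNCiff : NC x (m+2) c ↔ NC x (m+1) (Fin.init c) := by
          refine ⟨hNCdown, fun h p q h1 h2 tp tq => ?_⟩
          exact h p q h1 h2 ((tr_init_iff c p).mpr ⟨htrlow p tp, tp⟩)
            ((tr_init_iff c q).mpr ⟨htrlow q tq, tq⟩)
        have htopTiff : ∀ q, topT (m+2) c q ↔ topT (m+1) (Fin.init c) q := by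
          intro q
          constructor
          · rintro ⟨tq, htop⟩
            exact ⟨(tr_init_iff c q).mpr ⟨htrlow q tq, tq⟩,
              fun r hr trr => htop r hr ((tr_init_iff c r).mp trr).2⟩
          · rintro ⟨tq, htop⟩
            refine ⟨((tr_init_iff c q).mp tq).2, fun r hr trr => ?_⟩
            rcases Nat.lt_or_ge r m with h | h
            · exact htop r hr ((tr_init_iff c r).mpr ⟨by omega, trr⟩)
            · rcases Nat.eq_or_lt_of_le h with h' | h'
              · exact hnotrm (h' ▸ trr)
              · exact hnotr_hi r (by omega) trr
        by_cases hab : c (Fin.last (m+1)) = b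
        · rw [if_pos hab, ih]
          have hcb : c ⟨m+1, by omega⟩ = b := hab
          have hc'b : c ⟨m, by omega⟩ = b := hat.symm.trans hcb
          have ic'b : Fin.init c ⟨m, by omega⟩ = b := hc'b
          constructor
          · rintro ⟨hnc', hbd'⟩
            rw [Bd_succ] at hbd'
            refine ⟨hNCiff.mpr hnc', ?_⟩
            rw [Bd_succ]
            refine ⟨fun hne => absurd hcb hne, fun q hq => ?_⟩
            rw [if_pos hcb]
            have h2 := hbd'.2 q ((htopTiff q).mp hq)
            rw [if_pos ic'b] at h2
            obtain ⟨⟨hqlt, _⟩, _⟩ := hq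
            omega
          · rintro ⟨hnc, hbd⟩
            rw [Bd_succ] at hbd
            rw [Bd_succ]
            refine ⟨hNCiff.mp hnc, fun hne => absurd ic'b hne, fun q hq => ?_⟩
            rw [if_pos ic'b]
            have h2 := hbd.2 q ((htopTiff q).mpr hq)
            rw [if_pos hcb] at h2
            obtain ⟨⟨hqlt, _⟩, _⟩ := hq
            omega
        · rw [if_neg hab]
          simp only [Bool.and_eq_true, beq_iff_eq, ih]
          have hab' : ¬ (c ⟨m+1, by omega⟩ = b) := hab
          have hc'a : c ⟨m, by omega⟩ = c (Fin.last (m+1)) := hat.symm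
          have ic'a : Fin.init c ⟨m, by omega⟩ = c (Fin.last (m+1)) := hc'a
          constructor
          · rintro ⟨ht, hnc', hbd'⟩
            rw [Bd_succ] at hbd'
            refine ⟨hNCiff.mpr hnc', ?_⟩
            rw [Bd_succ]
            refine ⟨fun _ => ht, fun q hq => ?_⟩
            rw [if_neg hab']
            have h2 := hbd'.2 q ((htopTiff q).mp hq)
            rw [if_pos ic'a] at h2
            omega
          · rintro ⟨hnc, hbd⟩
            rw [Bd_succ] at hbd
            refine ⟨hbd.1 hab, hNCiff.mp hnc, ?_⟩
            rw [Bd_succ]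
            refine ⟨fun hne => absurd ic'a hne, fun q hq => ?_⟩
            rw [if_pos ic'a]
            have h2 := hbd.2 q ((htopTiff q).mpr hq)
            rw [if_neg hab'] at h2
            omega
      · -- transition at the top pair
        have htrm : tr (m+2) c m := htm.mpr hat
        have htopm : topT (m+2) c m := ⟨htrm, fun r hr => hnotr_hi r (by omega)⟩
        have htopTeq : ∀ q, topT (m+2) c q → q = m := by
          rintro q ⟨tq, htop⟩
          rcases Nat.lt_or_ge q m with h | h
          · exact absurd htrm (htop m h)
          · obtain ⟨hb, _⟩ := tq
            omega
        have hpair : NC x (m+2) c ↔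
            (NC x (m+1) (Fin.init c) ∧ ∀ p, tr (m+1) (Fin.init c) p → p + x + 1 ≤ m) := by
          constructor
          · intro hnc
            refine ⟨hNCdown hnc, fun p tp => ?_⟩
            obtain ⟨hplt, tp'⟩ := (tr_init_iff c p).mp tp
            by_contra hcon
            exact hnc p m (by omega) (by omega) tp' htrm
          · rintro ⟨hnc', hfar⟩ p q h1 h2 tp tq
            rcases Nat.lt_or_ge q m with h | h
            · exact hnc' p q h1 h2 ((tr_init_iff c p).mpr ⟨by omega, tp⟩)
                ((tr_init_iff c q).mpr ⟨by omega, tq⟩)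
            · obtain ⟨hb, _⟩ := tq
              have hq : q = m := by omega
              subst hq
              have := hfar p ((tr_init_iff c p).mpr ⟨by omega, tp⟩)
              omega
        have hfar_of_top : NC x (m+1) (Fin.init c) →
            (∀ q, topT (m+1) (Fin.init c) q → q + x + 1 ≤ m) →
            ∀ p, tr (m+1) (Fin.init c) p → p + x + 1 ≤ m := by
          intro hnc' htop p tp
          obtain ⟨q0, hpq0, htq0⟩ := exists_topT tp
          have := htop q0 htq0
          omega
        by_cases hab : c (Fin.last (m+1)) = b
        · rw [if_pos hab, ih]
          have hcb : c ⟨m+1, by omega⟩ = b := hab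
          have hc'ne : ¬ (c ⟨m, by omega⟩ = b) := fun h => hat (hab.trans h.symm)
          have ic'ne : ¬ (Fin.init c ⟨m, by omega⟩ = b) := hc'ne
          constructor
          · rintro ⟨hnc', hbd'⟩
            rw [Bd_succ] at hbd'
            have ht1 : t - 1 = 0 := hbd'.1 ic'ne
            refine ⟨hpair.mpr ⟨hnc', hfar_of_top hnc'
              (fun q hq => by have h2 := hbd'.2 q hq; rwa [if_neg ic'ne] at h2)⟩, ?_⟩
            rw [Bd_succ]
            refine ⟨fun hne => absurd hcb hne, fun q hq => ?_⟩
            rw [if_pos hcb]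
            have := htopTeq q hq
            omega
          · rintro ⟨hnc, hbd⟩
            rw [Bd_succ] at hbd
            have h2 := hbd.2 m htopm
            rw [if_pos hcb] at h2
            refine ⟨(hpair.mp hnc).1, ?_⟩
            rw [Bd_succ]
            refine ⟨fun _ => by omega, fun q hq => ?_⟩
            rw [if_neg ic'ne]
            exact (hpair.mp hnc).2 q hq.1
        · rw [if_neg hab]
          simp only [Bool.and_eq_true, beq_iff_eq, ih]
          have hab'' : ¬ (c ⟨m+1, by omega⟩ = b) := hab
          have hc'na : ¬ (c ⟨m, by omega⟩ = c (Fin.last (m+1))) := fun h => hat h.symm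
          have ic'na : ¬ (Fin.init c ⟨m, by omega⟩ = c (Fin.last (m+1))) := hc'na
          constructor
          · rintro ⟨ht, hnc', hbd''⟩
            rw [Bd_succ] at hbd''
            have hx0 : x = 0 := hbd''.1 ic'na
            refine ⟨hpair.mpr ⟨hnc', hfar_of_top hnc'
              (fun q hq => by have h2 := hbd''.2 q hq; rwa [if_neg ic'na] at h2)⟩, ?_⟩
            rw [Bd_succ]
            refine ⟨fun _ => ht, fun q hq => ?_⟩
            rw [if_neg hab'']
            have := htopTeq q hq
            omega
          · rintro ⟨hnc, hbd⟩
            rw [Bd_succ] at hbd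
            have ht := hbd.1 hab
            have h2 := hbd.2 m htopm
            rw [if_neg hab''] at h2
            refine ⟨ht, (hpair.mp hnc).1, ?_⟩
            rw [Bd_succ]
            refine ⟨fun _ => by omega, fun q hq => ?_⟩
            rw [if_neg ic'na]
            exact (hpair.mp hnc).2 q hq.1
lemma lexLt_iff : ∀ n (d c : Fin n → Bool), lexLt n d c ↔ ltF n d c = true := by
  intro n
  induction n with
  | zero =>
    intro d c
    constructor
    · rintro ⟨i, _⟩; exact absurd i.2 (by omega)
    · intro h; exact absurd h (by simp [ltF])
  | succ n ih =>
    intro d c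
    rw [ltF_succ, Bool.or_eq_true, Bool.and_eq_true, Bool.and_eq_true]
    constructor
    · rintro ⟨i, hdi, hci, hup⟩
      rcases Nat.lt_or_ge (i : ℕ) n with hi | hi
      · right
        have htop : d (Fin.last n) = c (Fin.last n) := hup (Fin.last n) (by simpa using hi)
        have hlex : lexLt n (Fin.init d) (Fin.init c) := by
          refine ⟨⟨(i : ℕ), hi⟩, hdi, hci, fun j hj => hup j.castSucc (by simpa using hj)⟩
        exact ⟨by simp [htop], (ih _ _).mp hlex⟩
      · left
        have hieq : i = Fin.last n := Fin.ext (by have := i.2; simp; omega)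
        subst hieq
        exact ⟨by simp [hdi], hci⟩
    · rintro (⟨h1, h2⟩ | ⟨h1, h2⟩)
      · refine ⟨Fin.last n, by simpa using h1, h2, fun j hj => ?_⟩
        have := j.2
        simp at hj
        omega
      · obtain ⟨i0, hdi, hci, hup⟩ := (ih _ _).mpr h2
        refine ⟨i0.castSucc, hdi, hci, fun j hj => ?_⟩
        induction j using Fin.lastCases with
        | last => simpa using h1
        | cast j' => exact hup j' (by simpa using hj)

lemma noForbidden_iff_VF (x n : ℕ) (b : Bool) (c : Fin (n+1) → Bool) (hb : c (Fin.last n) = b) :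
    noForbidden (n+1) x c ↔ VF x (n+1) 0 b c = true := by
  rw [noForbidden_iff_NC, VF_iff]
  constructor
  · intro h
    refine ⟨h, ?_⟩
    rw [Bd_succ]
    refine ⟨fun _ => rfl, fun q hq => ?_⟩
    rw [if_pos (show c ⟨n, by omega⟩ = b from hb)]
    obtain ⟨⟨hq1, _⟩, _⟩ := hq
    omega
  · exact fun h => h.1

lemma locoN_eq (x n : ℕ) : locoN (n+1) x = 2 * fc x n 0 := by
  unfold locoN
  have h1 : ∀ c : Fin (n+1) → Bool,
      noForbidden (n+1) x c ↔ VF x (n+1) 0 (c (Fin.last n)) c = true :=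
    fun c => noForbidden_iff_VF x n (c (Fin.last n)) c rfl
  rw [Nat.card_congr (Equiv.subtypeEquivRight h1), Nat.card_eq_fintype_card]
  rw [card_snoc_split' n _ (fun c' => VF x n 0 false c' = true)
    (fun c' => VF x n 0 true c' = true)
    (fun c' => by rw [Fin.snoc_last, VF_snoc]; simp)
    (fun c' => by rw [Fin.snoc_last, VF_snoc]; simp),
    card_VF, card_VF]
  omega

lemma Nex_eq (x : ℕ) (hx : 1 ≤ x) (i : ℕ) :
    Nex ((i : ℤ) - (x : ℤ) + 1) x = 2 * (fc x i x : ℤ) := by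
  rcases Nat.lt_or_ge i (x+1) with h | h
  · rw [Nex, if_pos (by omega), fc_small x i x (by omega)]
    norm_num
  · rw [Nex, if_neg (by omega)]
    have ht : ((i : ℤ) - (x : ℤ) + 1).toNat = i - x + 1 := by omega
    rw [ht, locoN_eq, fc_big x x i (by omega)]
    push_cast
    ring
end LocoAux

open LocoAux

/-- For all `m ≥ 2`, `x ≥ 1` and every codeword `c ∈ C(m, x)` with leftmost
bit `c_{m-1} = 0`, the index satisfies
`2 g(c) = Σ_{i=0}^{m-2} N(i - x + 1, x) · [c_i = 1]`, where any term `N(k, x)` with `k ≤ 1`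
is interpreted, by convention, as `2`. -/
theorem loco_index_formula_lmb_zero (m x : ℕ) (hm : 2 ≤ m) (hx : 1 ≤ x)
    (c : Fin m → Bool) (hc : noForbidden m x c)
    (h0 : c ⟨m - 1, by omega⟩ = false) :
    2 * (locoIdx m x c : ℤ)
      = ∑ i : Fin (m - 1),
          if c (Fin.castLE (by omega) i) = true then
            Nex (((i : ℕ) : ℤ) - (x : ℤ) + 1) x
          else 0 := by
  obtain ⟨k, rfl⟩ : ∃ k, m = k + 1 := ⟨m - 1, by omega⟩
  have h0' : c (Fin.last k) = false := h0
  have hcV : VF x (k+1) 0 false c = true := by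
    rw [← noForbidden_iff_VF x k false c h0']
    exact hc
  have hcV' : VF x k 0 false (Fin.init c) = true := by
    rw [VF_succ, if_pos h0'] at hcV
    exact hcV
  have hidx : locoIdx (k+1) x c = cntF x k 0 false (Fin.init c) := by
    unfold locoIdx
    have h1 : ∀ d : Fin (k+1) → Bool,
        (noForbidden (k+1) x d ∧ lexLt (k+1) d c) ↔
          (VF x (k+1) 0 (d (Fin.last k)) d = true ∧ ltF (k+1) d c = true) := by
      intro d
      rw [noForbidden_iff_VF x k (d (Fin.last k)) d rfl, lexLt_iff]
    rw [Nat.card_congr (Equiv.subtypeEquivRight h1), Nat.card_eq_fintype_card]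
    unfold cntF
    rw [card_snoc_split' k _
      (fun d' => VF x k 0 false d' = true ∧ ltF k d' (Fin.init c) = true)
      (fun _ => False)
      (fun d' => by
        rw [ltF_succ, Fin.snoc_last, Fin.init_snoc, VF_snoc, h0']
        simp)
      (fun d' => by
        rw [ltF_succ, Fin.snoc_last, Fin.init_snoc, VF_snoc, h0']
        simp),
      card_false (fun _ h => h), Nat.add_zero]
  have hmain := main_count x k 0 false (Fin.init c) hcV'
  simp only [Bool.false_eq_true, if_false, Nat.add_zero] at hmain
  have key : 2 * ((phiF x k (Fin.init c) : ℕ) : ℤ)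
      = ∑ i : Fin k, if c (Fin.castLE (by omega) i) = true then
          Nex (((i : ℕ) : ℤ) - (x : ℤ) + 1) x else 0 := by
    unfold phiF
    push_cast
    rw [Finset.mul_sum]
    apply Finset.sum_congr rfl
    intro i _
    have hbit : (Fin.init c) i = c (Fin.castLE (by omega) i) := rfl
    rw [← hbit]
    by_cases hci : Fin.init c i = true
    · rw [if_pos hci, if_pos hci, Nex_eq x hx i]
    · rw [if_neg hci, if_neg hci]
      ring
  rw [← hmain, ← hidx] at key
  exact key
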